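/- Let G be a finite group, H a subgroup of G, H₀ a normal subgroup of H, and g ∈ H. Let g₁, …, g_t be a system of representatives of the H₀-conjugacy classes contained in g^G ∩ H (one representative from each H₀-conjugacy class of elements of H that are G-conjugate to g). Then fix(g,G/H) · [H : H₀] = Σ_{i=1}^t [C_G(g_i) : C_{H₀}(g_i)]. -/

import Mathlib

private lemma nat_card_sigma {t : ℕ} (f : Fin t → Type*) [∀ i, Finite (f i)] :
    Nat.card (Σ i, f i) = ∑ i, Nat.card (f i) := by
  classical
  letI : ∀ i, Fintype (f i) := fun i => Fintype.ofFinite (f i)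
  simp [Nat.card_eq_fintype_card, Fintype.card_sigma]

/-- Lemma 1.2(i): if `H₀ ⊴ H ≤ G`, `g ∈ H`, and `g₁, …, g_t` are representatives of the
`H₀`-conjugacy classes contained in `g^G ∩ H`, then
`fix(g, G/H) · [H : H₀] = ∑ᵢ [C_G(gᵢ) : C_{H₀}(gᵢ)]`. -/
theorem fix_mul_index_eq_sum_relindex {G : Type*} [Group G] [Finite G]
    (H H₀ : Subgroup G) (hle : H₀ ≤ H) (hnorm : (H₀.subgroupOf H).Normal)
    (g : G) (hg : g ∈ H) (t : ℕ) (r : Fin t → G)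
    (hrH : ∀ i, r i ∈ H)
    (hrconj : ∀ i, IsConj g (r i))
    (hdistinct : ∀ i j : Fin t, i ≠ j → ¬ ∃ h ∈ H₀, h * r i * h⁻¹ = r j)
    (hcover : ∀ x ∈ H, IsConj g x → ∃ i : Fin t, ∃ h ∈ H₀, h * r i * h⁻¹ = x) :
    Nat.card (MulAction.fixedBy (G ⧸ H) g) * Subgroup.relIndex H₀ H =
      ∑ i : Fin t, Subgroup.relIndex H₀ (Subgroup.centralizer {r i}) := by
  classical
  -- choose conjugators: (s i)⁻¹ * g * s i = r i
  choose u hu using fun i => isConj_iff.mp (hrconj i)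
  set s : Fin t → G := fun i => (u i)⁻¹ with hs
  have hsg : ∀ i, (s i)⁻¹ * g * s i = r i := by
    intro i; simp only [hs, inv_inv]; exact hu i
  set C : Fin t → Subgroup G := fun i => Subgroup.centralizer {r i} with hC
  -- the projection G⧸H₀ → G⧸H
  let π : G ⧸ H₀ → G ⧸ H := Quotient.map' id fun a b h =>
    QuotientGroup.leftRel_apply.mpr (hle (QuotientGroup.leftRel_apply.mp h))
  have hπ : ∀ x : G, π (x : G ⧸ H₀) = (x : G ⧸ H) := fun _ => rfl
  set S : Set (G ⧸ H) := MulAction.fixedBy (G ⧸ H) g with hS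
  have hmemS : ∀ x : G, ((x : G ⧸ H) ∈ S) ↔ x⁻¹ * g * x ∈ H := by
    intro x
    rw [hS, MulAction.mem_fixedBy]
    have h1 : g • ((x : G ⧸ H)) = ((g * x : G) : G ⧸ H) := rfl
    rw [h1, QuotientGroup.eq]
    constructor
    · intro h
      have := (Subgroup.inv_mem_iff H).mpr h
      simpa [mul_assoc] using this
    · intro h
      have := (Subgroup.inv_mem_iff H).mpr h
      simpa [mul_assoc] using this
  -- key computation: elements s i * c with c in the centralizer conjugate g to r i
  have hkey : ∀ (i : Fin t) (c : C i), ((s i * c)⁻¹ * g * (s i * c) : G) = r i := by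
    rintro i ⟨c, hc⟩
    have hc' : r i * c = c * r i := (Subgroup.mem_centralizer_singleton_iff.mp hc).symm
    have : (c : G)⁻¹ * ((s i)⁻¹ * g * s i) * c = c⁻¹ * (r i * c) := by
      rw [hsg i, mul_assoc]
    calc ((s i * c)⁻¹ * g * (s i * c) : G)
        = (c : G)⁻¹ * ((s i)⁻¹ * g * s i) * c := by group
      _ = c⁻¹ * (r i * c) := this
      _ = r i := by rw [hc']; group
  -- the map F
  have wd : ∀ (i : Fin t) (b c : C i),
      @Setoid.r _ (QuotientGroup.leftRel (H₀.subgroupOf (C i))) b c →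
      ((s i * b : G) : G ⧸ H₀) = ((s i * c : G) : G ⧸ H₀) := by
    intro i b c h
    have h' : (b : G)⁻¹ * c ∈ H₀ := by
      have := QuotientGroup.leftRel_apply.mp h
      exact (Subgroup.mem_subgroupOf).mp this
    rw [QuotientGroup.eq]
    simpa [mul_assoc] using h'
  set F0 : ∀ i : Fin t, (C i ⧸ H₀.subgroupOf (C i)) → G ⧸ H₀ := fun i q =>
    Quotient.liftOn' q (fun c => ((s i * c : G) : G ⧸ H₀)) (wd i) with hF0
  have hF0mk : ∀ (i : Fin t) (c : C i), F0 i (QuotientGroup.mk c) = ((s i * c : G) : G ⧸ H₀) :=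
    fun _ _ => rfl
  have hF0S : ∀ (i : Fin t) (q : C i ⧸ H₀.subgroupOf (C i)), π (F0 i q) ∈ S := by
    intro i q
    induction q using Quotient.inductionOn' with
    | h c =>
      rw [hF0mk i c, hπ, hmemS, hkey i c]
      exact hrH i
  set F : (Σ i : Fin t, C i ⧸ H₀.subgroupOf (C i)) → {z : G ⧸ H₀ // π z ∈ S} :=
    fun p => ⟨F0 p.1 p.2, hF0S p.1 p.2⟩ with hF
  have hFinj : Function.Injective F := by
    rintro ⟨i, q⟩ ⟨j, q'⟩ heq
    induction q using Quotient.inductionOn' with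
    | h b =>
      induction q' using Quotient.inductionOn' with
      | h c =>
        have heq' : ((s i * b : G) : G ⧸ H₀) = ((s j * c : G) : G ⧸ H₀) :=
          congrArg Subtype.val heq
        have hh : ((s i * b : G))⁻¹ * (s j * c) ∈ H₀ := QuotientGroup.eq.mp heq'
        set h : G := ((s i * b : G))⁻¹ * (s j * c) with hhd
        have hsc : (s j * c : G) = (s i * b) * h := by rw [hhd]; group
        have hij : i = j := by
          by_contra hne
          refine hdistinct i j hne ⟨h⁻¹, (Subgroup.inv_mem_iff H₀).mpr hh, ?_⟩
          have : r j = h⁻¹ * r i * h := by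
            calc r j = ((s j * c)⁻¹ * g * (s j * c) : G) := (hkey j c).symm
              _ = h⁻¹ * (((s i * b : G))⁻¹ * g * (s i * b)) * h := by rw [hsc]; group
              _ = h⁻¹ * r i * h := by rw [hkey i b]
          rw [this]; group
        subst hij
        have hbc : (b : G)⁻¹ * c ∈ H₀ := by
          have : ((s i * b : G))⁻¹ * (s i * c) ∈ H₀ := hh
          simpa [mul_assoc] using this
        have hq : (QuotientGroup.mk b : C i ⧸ H₀.subgroupOf (C i)) = QuotientGroup.mk c := by
          rw [QuotientGroup.eq]
          exact (Subgroup.mem_subgroupOf).mpr (by simpa using hbc)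
        exact congrArg (Sigma.mk i) hq
  have hFsurj : Function.Surjective F := by
    rintro ⟨z, hz⟩
    obtain ⟨x, rfl⟩ := QuotientGroup.mk_surjective z
    rw [hπ, hmemS] at hz
    obtain ⟨i, h, hhH₀, hconj⟩ := hcover (x⁻¹ * g * x) hz
      (isConj_iff.mpr ⟨x⁻¹, by group⟩)
    set cc : G := (s i)⁻¹ * x * h with hccd
    have hccC : cc ∈ C i := by
      rw [hC, Subgroup.mem_centralizer_singleton_iff]
      have h1 : s i * r i * (s i)⁻¹ = g := by rw [← hsg i]; group
      have h2 : cc⁻¹ * r i * cc = r i := by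
        calc cc⁻¹ * r i * cc
            = h⁻¹ * (x⁻¹ * (s i * r i * (s i)⁻¹) * x) * h := by rw [hccd]; group
          _ = h⁻¹ * (x⁻¹ * g * x) * h := by rw [h1]
          _ = h⁻¹ * (h * r i * h⁻¹) * h := by rw [hconj]
          _ = r i := by group
      calc cc * r i = cc * (cc⁻¹ * r i * cc) := by rw [h2]
        _ = r i * cc := by group
    refine ⟨⟨i, QuotientGroup.mk ⟨cc, hccC⟩⟩, ?_⟩
    apply Subtype.ext
    show F0 i (QuotientGroup.mk ⟨cc, hccC⟩) = (x : G ⧸ H₀)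
    rw [hF0mk]
    have h1 : (s i * cc : G) = x * h := by rw [hccd]; group
    rw [h1, QuotientGroup.eq]
    have : (x * h)⁻¹ * x = h⁻¹ := by group
    rw [this]
    exact (Subgroup.inv_mem_iff H₀).mpr hhH₀
  -- now count
  have hcard : Nat.card (Σ i : Fin t, C i ⧸ H₀.subgroupOf (C i)) =
      Nat.card {z : G ⧸ H₀ // π z ∈ S} :=
    Nat.card_eq_of_bijective F ⟨hFinj, hFsurj⟩
  have hLHS : Nat.card {z : G ⧸ H₀ // π z ∈ S} = Nat.card S * Subgroup.relIndex H₀ H := by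
    have e1 : {z : G ⧸ H₀ // π z ∈ S} ≃
        {p : (G ⧸ H) × (H ⧸ H₀.subgroupOf H) // p.1 ∈ S} :=
      (Subgroup.quotientEquivProdOfLE hle).subtypeEquiv (fun z => by
        induction z using Quotient.inductionOn' with
        | h x => exact Iff.rfl)
    have e2 : {p : (G ⧸ H) × (H ⧸ H₀.subgroupOf H) // p.1 ∈ S} ≃
        S × (H ⧸ H₀.subgroupOf H) :=
      ⟨fun p => (⟨p.1.1, p.2⟩, p.1.2), fun q => ⟨(q.1.1, q.2), q.1.2⟩,
        fun _ => rfl, fun _ => rfl⟩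
    rw [Nat.card_congr (e1.trans e2), Nat.card_prod]
    rfl
  have hRHS : ∑ i : Fin t, Subgroup.relIndex H₀ (Subgroup.centralizer {r i}) =
      Nat.card (Σ i : Fin t, C i ⧸ H₀.subgroupOf (C i)) := by
    rw [nat_card_sigma]
    rfl
  rw [hRHS, hcard, hLHS]
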